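/- Let u : [0,∞) → ℝ⁴ be a differentiable function satisfying u'(t) = F(u(t)) for all t ≥ 0, where F is the ZIP regulatory vector field with parameter f ∈ [0,1). If u(0) ∈ S = [0,1]⁴, then u(t) ∈ S for all t ≥ 0; that is, the cube S is positively invariant for the ZIP regulatory system. -/

import Mathlib

set_option maxHeartbeats 1600000
/-- The ZIP regulatory vector field on ℝ⁴ (components indexed by `Fin 4`). -/
noncomputable def zipField (κ γ₁ γ₂ γ₃ f : ℝ) (u : Fin 4 → ℝ) : Fin 4 → ℝ :=
  ![κ * (u 2) ^ 2 * (1 - u 0) - u 0,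
    u 0 * f - u 1,
    1 - γ₁ * u 2 * u 3 - u 2,
    γ₂ * u 1 - γ₃ * u 2 * u 3 - (1 + γ₂ * u 1) * u 3]

open Set Filter
open scoped Topology

lemma posPart_sq_hasDerivAt (x : ℝ) :
    HasDerivAt (fun y : ℝ => max y 0 ^ 2) (2 * max x 0) x := by
  rcases lt_trichotomy x 0 with h | h | h
  · have he : (fun y : ℝ => max y 0 ^ 2) =ᶠ[𝓝 x] fun _ => (0:ℝ) := by
      filter_upwards [eventually_lt_nhds h] with y hy
      simp [max_eq_right hy.le]
    rw [max_eq_right h.le, mul_zero]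
    exact (hasDerivAt_const x (0:ℝ)).congr_of_eventuallyEq he
  · subst h
    rw [max_self, mul_zero]
    rw [hasDerivAt_iff_isLittleO]
    simp only [sub_zero, smul_zero, sub_zero, max_self, ne_eq, OfNat.ofNat_ne_zero,
      not_false_eq_true, zero_pow]
    rw [Asymptotics.isLittleO_iff]
    intro c hc
    filter_upwards [Metric.ball_mem_nhds (0:ℝ) hc] with y hy
    have h1 : |y| < c := by simpa [Real.dist_eq] using hy
    have h2 : max y 0 ^ 2 ≤ y ^ 2 := by
      rcases le_or_gt y 0 with h' | h'
      · simp [max_eq_right h', sq_nonneg]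
      · simp [max_eq_left h'.le]
    have : y ^ 2 ≤ c * |y| := by
      nlinarith [abs_nonneg y, sq_abs y]
    simp only [Real.norm_eq_abs]
    calc |max y 0 ^ 2| = max y 0 ^ 2 := abs_of_nonneg (sq_nonneg _)
      _ ≤ y ^ 2 := h2
      _ ≤ c * |y| := this
  · have he : (fun y : ℝ => max y 0 ^ 2) =ᶠ[𝓝 x] fun y => y ^ 2 := by
      filter_upwards [eventually_gt_nhds h] with y hy
      simp [max_eq_left hy.le]
    rw [max_eq_left h.le]
    have h2 := (hasDerivAt_pow 2 x).congr_of_eventuallyEq he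
    simpa using h2



lemma zipT1 (κ w v a : ℝ) (hκ : 0 ≤ κ) (ha : 0 ≤ a) (ia : a * (v - 1) = a ^ 2) :
    2 * a * (κ * w ^ 2 * (1 - v) - v) ≤ 0 := by
  have k1 : κ * w ^ 2 * (a * (v - 1)) = κ * w ^ 2 * a ^ 2 := by rw [ia]
  nlinarith [k1, mul_nonneg (mul_nonneg hκ (sq_nonneg w)) (sq_nonneg a), sq_nonneg a]

lemma zipT2 (κ w v b : ℝ) (hκ : 0 ≤ κ) (hb : 0 ≤ b) (ib : b * (-v) = b ^ 2) :
    -(2 * b) * (κ * w ^ 2 * (1 - v) - v) ≤ 0 := by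
  have ib' : b * v = -b ^ 2 := by linarith
  have k2 : κ * w ^ 2 * (b * v) = κ * w ^ 2 * (-b ^ 2) := by rw [ib']
  nlinarith [k2, mul_nonneg (mul_nonneg hκ (sq_nonneg w)) hb,
    mul_nonneg (mul_nonneg hκ (sq_nonneg w)) (sq_nonneg b), sq_nonneg b]

lemma zipT3 (f v0 v1 a0 a1 : ℝ) (hf0 : 0 ≤ f) (hf1 : f ≤ 1)
    (ha0 : 0 ≤ a0) (ha1 : 0 ≤ a1) (la0 : v0 - 1 ≤ a0) (ia1 : a1 * (v1 - 1) = a1 ^ 2) :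
    2 * a1 * (v0 * f - v1) ≤ a0 ^ 2 + a1 ^ 2 := by
  nlinarith [mul_nonneg (mul_nonneg ha1 hf0) (by linarith : 0 ≤ 1 + a0 - v0),
    mul_nonneg ha1 (by linarith : 0 ≤ 1 - f),
    mul_nonneg (mul_nonneg ha0 ha1) (by linarith : 0 ≤ 1 - f),
    sq_nonneg (a0 - a1)]

lemma zipT4 (f v0 v1 b0 b1 : ℝ) (hf0 : 0 ≤ f) (hf1 : f ≤ 1)
    (hb0 : 0 ≤ b0) (hb1 : 0 ≤ b1) (lb0 : -v0 ≤ b0) (ib1 : b1 * (-v1) = b1 ^ 2) :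
    -(2 * b1) * (v0 * f - v1) ≤ b0 ^ 2 + b1 ^ 2 := by
  nlinarith [mul_nonneg (mul_nonneg hb1 hf0) (by linarith : 0 ≤ b0 + v0),
    mul_nonneg (mul_nonneg hb0 hb1) (by linarith : 0 ≤ 1 - f),
    sq_nonneg (b0 - b1)]

lemma zipT5 (γ₁ M v2 v3 a2 b3 : ℝ) (hγ₁ : 0 ≤ γ₁) (hM : 1 ≤ M)
    (ha2 : 0 ≤ a2) (ua2 : a2 ≤ M) (hb3 : 0 ≤ b3) (lb3 : -v3 ≤ b3)
    (ia2 : a2 * (v2 - 1) = a2 ^ 2) :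
    2 * a2 * (1 - γ₁ * v2 * v3 - v2) ≤ γ₁ * (1 + M) * (a2 ^ 2 + b3 ^ 2) := by
  have m : a2 * v2 = a2 ^ 2 + a2 := by linarith
  have k5 : γ₁ * v3 * (a2 * v2) = γ₁ * v3 * (a2 ^ 2 + a2) := by rw [m]
  nlinarith [k5, mul_nonneg (mul_nonneg hγ₁ (sq_nonneg a2)) (by linarith : 0 ≤ b3 + v3),
    mul_nonneg (mul_nonneg hγ₁ ha2) (by linarith : 0 ≤ b3 + v3),
    mul_nonneg (mul_nonneg (mul_nonneg hγ₁ hb3) ha2) (by linarith : 0 ≤ M - a2),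
    mul_nonneg (mul_nonneg hγ₁ (by linarith : (0:ℝ) ≤ 1 + M)) (sq_nonneg (a2 - b3)),
    sq_nonneg a2, ha2]

lemma zipT6 (γ₁ M v2 v3 b2 : ℝ) (hγ₁ : 0 ≤ γ₁) (hv3 : -M ≤ v3)
    (hb2 : 0 ≤ b2) (ib2 : b2 * (-v2) = b2 ^ 2) :
    -(2 * b2) * (1 - γ₁ * v2 * v3 - v2) ≤ 2 * γ₁ * M * b2 ^ 2 := by
  have m : b2 * v2 = -b2 ^ 2 := by linarith
  have k6 : γ₁ * v3 * (b2 * v2) = γ₁ * v3 * (-b2 ^ 2) := by rw [m]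
  nlinarith [k6, mul_nonneg (mul_nonneg hγ₁ (sq_nonneg b2)) (by linarith : 0 ≤ M + v3),
    sq_nonneg b2, hb2]

lemma zipT7 (γ₂ γ₃ M v1 v2 v3 a3 b2 : ℝ) (hγ₂ : 0 ≤ γ₂) (hγ₃ : 0 ≤ γ₃) (hM : 1 ≤ M)
    (ha3 : 0 ≤ a3) (ua3 : a3 ≤ M) (hb2 : 0 ≤ b2) (lb2 : -v2 ≤ b2)
    (hv1 : -M ≤ v1) (ia3 : a3 * (v3 - 1) = a3 ^ 2) :
    2 * a3 * (γ₂ * v1 - γ₃ * v2 * v3 - (1 + γ₂ * v1) * v3)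
      ≤ γ₃ * (1 + M) * (a3 ^ 2 + b2 ^ 2) + 2 * γ₂ * M * a3 ^ 2 := by
  have m : a3 * v3 = a3 ^ 2 + a3 := by linarith
  have k7a : γ₃ * v2 * (a3 * v3) = γ₃ * v2 * (a3 ^ 2 + a3) := by rw [m]
  have k7b : γ₂ * v1 * (a3 * v3) = γ₂ * v1 * (a3 ^ 2 + a3) := by rw [m]
  nlinarith [k7a, k7b,
    mul_nonneg (mul_nonneg hγ₃ (sq_nonneg a3)) (by linarith : 0 ≤ b2 + v2),
    mul_nonneg (mul_nonneg hγ₃ ha3) (by linarith : 0 ≤ b2 + v2),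
    mul_nonneg (mul_nonneg (mul_nonneg hγ₃ hb2) ha3) (by linarith : 0 ≤ M - a3),
    mul_nonneg (mul_nonneg hγ₃ (by linarith : (0:ℝ) ≤ 1 + M)) (sq_nonneg (a3 - b2)),
    mul_nonneg (mul_nonneg hγ₂ (sq_nonneg a3)) (by linarith : 0 ≤ M + v1),
    sq_nonneg a3, ha3]

lemma zipT8 (γ₂ γ₃ M v1 v2 v3 b1 b2 b3 : ℝ) (hγ₂ : 0 ≤ γ₂) (hγ₃ : 0 ≤ γ₃) (hM : 1 ≤ M)
    (hb1 : 0 ≤ b1) (hb2 : 0 ≤ b2) (hb3 : 0 ≤ b3) (ub3 : b3 ≤ M)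
    (lb1 : -v1 ≤ b1) (lb2 : -v2 ≤ b2) (hv1 : -M ≤ v1)
    (ib3 : b3 * (-v3) = b3 ^ 2) :
    -(2 * b3) * (γ₂ * v1 - γ₃ * v2 * v3 - (1 + γ₂ * v1) * v3)
      ≤ γ₂ * (b1 ^ 2 + b3 ^ 2) + γ₃ * M * (b2 ^ 2 + b3 ^ 2) + 2 * γ₂ * M * b3 ^ 2 := by
  have m : b3 * v3 = -b3 ^ 2 := by linarith
  have k8a : γ₃ * v2 * (b3 * v3) = γ₃ * v2 * (-b3 ^ 2) := by rw [m]
  have k8b : γ₂ * v1 * (b3 * v3) = γ₂ * v1 * (-b3 ^ 2) := by rw [m]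
  nlinarith [k8a, k8b,
    mul_nonneg (mul_nonneg hγ₂ hb3) (by linarith : 0 ≤ b1 + v1),
    mul_nonneg hγ₂ (sq_nonneg (b1 - b3)),
    mul_nonneg (mul_nonneg hγ₃ (sq_nonneg b3)) (by linarith : 0 ≤ b2 + v2),
    mul_nonneg (mul_nonneg (mul_nonneg hγ₃ hb2) hb3) (by linarith : 0 ≤ M - b3),
    mul_nonneg (mul_nonneg hγ₃ (by linarith : (0:ℝ) ≤ M)) (sq_nonneg (b2 - b3)),
    mul_nonneg (mul_nonneg hγ₂ (sq_nonneg b3)) (by linarith : 0 ≤ M + v1),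
    sq_nonneg b3, hb3]




lemma pp_mul (x : ℝ) : max x 0 * x = max x 0 ^ 2 := by
  rcases le_or_gt x 0 with h | h
  · simp [max_eq_right h]
  · rw [max_eq_left h.le]; ring

lemma zip_hcK (γ₁ γ₂ γ₃ M : ℝ) (hγ₁ : 0 < γ₁) (hγ₂ : 0 < γ₂) (hγ₃ : 0 < γ₃) (hM : 1 ≤ M) :
    (1 + 1 + γ₁ * (1 + M) + 2 * γ₁ * M + γ₃ * (1 + M) + 2 * γ₂ * M + γ₂
      + γ₃ * M + 2 * γ₂ * M) ≤ 4 * (1 + γ₁ + γ₂ + γ₃) * (1 + M) := by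
  nlinarith [mul_nonneg hγ₁.le (by linarith : (0:ℝ) ≤ M), mul_nonneg hγ₂.le (by linarith : (0:ℝ) ≤ M),
    mul_nonneg hγ₃.le (by linarith : (0:ℝ) ≤ M), hγ₁.le, hγ₂.le, hγ₃.le, hM]

lemma zip_key (κ γ₁ γ₂ γ₃ f M v0 v1 v2 v3 a0 a1 a2 a3 b0 b1 b2 b3 Q : ℝ)
    (hκ : 0 < κ) (hγ₁ : 0 < γ₁) (hγ₂ : 0 < γ₂) (hγ₃ : 0 < γ₃)
    (hf0 : 0 ≤ f) (hf1 : f ≤ 1) (hM : 1 ≤ M)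
    (hv0 : -M ≤ v0) (hv1 : -M ≤ v1) (hv1' : v1 ≤ M)
    (hv2 : -M ≤ v2) (hv3 : -M ≤ v3)
    (ha0 : 0 ≤ a0) (ha1 : 0 ≤ a1) (ha2 : 0 ≤ a2) (ha3 : 0 ≤ a3)
    (hb0 : 0 ≤ b0) (hb1 : 0 ≤ b1) (hb2 : 0 ≤ b2) (hb3 : 0 ≤ b3)
    (la0 : v0 - 1 ≤ a0) (lb0 : -v0 ≤ b0) (lb1 : -v1 ≤ b1) (lb2 : -v2 ≤ b2) (lb3 : -v3 ≤ b3)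
    (ua2 : a2 ≤ M) (ua3 : a3 ≤ M) (ub3 : b3 ≤ M)
    (ia0 : a0 * (v0 - 1) = a0 ^ 2) (ia1 : a1 * (v1 - 1) = a1 ^ 2)
    (ia2 : a2 * (v2 - 1) = a2 ^ 2) (ia3 : a3 * (v3 - 1) = a3 ^ 2)
    (ib0 : b0 * (-v0) = b0 ^ 2) (ib1 : b1 * (-v1) = b1 ^ 2)
    (ib2 : b2 * (-v2) = b2 ^ 2) (ib3 : b3 * (-v3) = b3 ^ 2)
    (hQdef : Q = (a0 ^ 2 + b0 ^ 2) + (a1 ^ 2 + b1 ^ 2) + (a2 ^ 2 + b2 ^ 2) + (a3 ^ 2 + b3 ^ 2)) :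
    (2 * a0 - 2 * b0) * (κ * v2 ^ 2 * (1 - v0) - v0)
    + (2 * a1 - 2 * b1) * (v0 * f - v1)
    + (2 * a2 - 2 * b2) * (1 - γ₁ * v2 * v3 - v2)
    + (2 * a3 - 2 * b3) * (γ₂ * v1 - γ₃ * v2 * v3 - (1 + γ₂ * v1) * v3)
    ≤ (4 * (1 + γ₁ + γ₂ + γ₃) * (1 + M)) * Q := by
  have hQ : 0 ≤ Q := by rw [hQdef]; positivity
  have T1 := zipT1 κ v2 v0 a0 hκ.le ha0 ia0
  have T2 := zipT2 κ v2 v0 b0 hκ.le hb0 ib0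
  have T3 := zipT3 f v0 v1 a0 a1 hf0 hf1 ha0 ha1 la0 ia1
  have T4 := zipT4 f v0 v1 b0 b1 hf0 hf1 hb0 hb1 lb0 ib1
  have T5 := zipT5 γ₁ M v2 v3 a2 b3 hγ₁.le hM ha2 ua2 hb3 lb3 ia2
  have T6 := zipT6 γ₁ M v2 v3 b2 hγ₁.le hv3 hb2 ib2
  have T7 := zipT7 γ₂ γ₃ M v1 v2 v3 a3 b2 hγ₂.le hγ₃.le hM ha3 ua3 hb2 lb2 hv1 ia3
  have T8 := zipT8 γ₂ γ₃ M v1 v2 v3 b1 b2 b3 hγ₂.le hγ₃.le hM hb1 hb2 hb3 ub3 lb1 lb2 hv1 ib3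
  -- piece bounds against Q
  have s1 : a0 ^ 2 + a1 ^ 2 ≤ Q := by linarith only [hQdef, sq_nonneg b0, sq_nonneg b1, sq_nonneg a2, sq_nonneg b2, sq_nonneg a3, sq_nonneg b3]
  have s2 : b0 ^ 2 + b1 ^ 2 ≤ Q := by linarith only [hQdef, sq_nonneg a0, sq_nonneg a1, sq_nonneg a2, sq_nonneg b2, sq_nonneg a3, sq_nonneg b3]
  have s3 : a2 ^ 2 + b3 ^ 2 ≤ Q := by linarith only [hQdef, sq_nonneg a0, sq_nonneg b0, sq_nonneg a1, sq_nonneg b1, sq_nonneg b2, sq_nonneg a3]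
  have s4 : b2 ^ 2 ≤ Q := by linarith only [hQdef, sq_nonneg a0, sq_nonneg b0, sq_nonneg a1, sq_nonneg b1, sq_nonneg a2, sq_nonneg a3, sq_nonneg b3]
  have s5 : a3 ^ 2 + b2 ^ 2 ≤ Q := by linarith only [hQdef, sq_nonneg a0, sq_nonneg b0, sq_nonneg a1, sq_nonneg b1, sq_nonneg a2, sq_nonneg b3]
  have s6 : a3 ^ 2 ≤ Q := by linarith only [hQdef, sq_nonneg a0, sq_nonneg b0, sq_nonneg a1, sq_nonneg b1, sq_nonneg a2, sq_nonneg b2, sq_nonneg b3]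
  have s7 : b1 ^ 2 + b3 ^ 2 ≤ Q := by linarith only [hQdef, sq_nonneg a0, sq_nonneg b0, sq_nonneg a1, sq_nonneg a2, sq_nonneg b2, sq_nonneg a3]
  have s8 : b2 ^ 2 + b3 ^ 2 ≤ Q := by linarith only [hQdef, sq_nonneg a0, sq_nonneg b0, sq_nonneg a1, sq_nonneg b1, sq_nonneg a2, sq_nonneg a3]
  have s9 : b3 ^ 2 ≤ Q := by linarith only [hQdef, sq_nonneg a0, sq_nonneg b0, sq_nonneg a1, sq_nonneg b1, sq_nonneg a2, sq_nonneg b2, sq_nonneg a3]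
  have p5 : γ₁ * (1 + M) * (a2 ^ 2 + b3 ^ 2) ≤ γ₁ * (1 + M) * Q :=
    mul_le_mul_of_nonneg_left s3 (by positivity)
  have p6 : 2 * γ₁ * M * b2 ^ 2 ≤ 2 * γ₁ * M * Q :=
    mul_le_mul_of_nonneg_left s4 (by positivity)
  have p7a : γ₃ * (1 + M) * (a3 ^ 2 + b2 ^ 2) ≤ γ₃ * (1 + M) * Q :=
    mul_le_mul_of_nonneg_left s5 (by positivity)
  have p7b : 2 * γ₂ * M * a3 ^ 2 ≤ 2 * γ₂ * M * Q :=
    mul_le_mul_of_nonneg_left s6 (by positivity)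
  have p8a : γ₂ * (b1 ^ 2 + b3 ^ 2) ≤ γ₂ * Q := mul_le_mul_of_nonneg_left s7 hγ₂.le
  have p8b : γ₃ * M * (b2 ^ 2 + b3 ^ 2) ≤ γ₃ * M * Q :=
    mul_le_mul_of_nonneg_left s8 (by positivity)
  have p8c : 2 * γ₂ * M * b3 ^ 2 ≤ 2 * γ₂ * M * Q :=
    mul_le_mul_of_nonneg_left s9 (by positivity)
  have hcK := zip_hcK γ₁ γ₂ γ₃ M hγ₁ hγ₂ hγ₃ hM
  have hsum := mul_le_mul_of_nonneg_right hcK hQ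
  have step1 : (2 * a0 - 2 * b0) * (κ * v2 ^ 2 * (1 - v0) - v0)
      + (2 * a1 - 2 * b1) * (v0 * f - v1)
      + (2 * a2 - 2 * b2) * (1 - γ₁ * v2 * v3 - v2)
      + (2 * a3 - 2 * b3) * (γ₂ * v1 - γ₃ * v2 * v3 - (1 + γ₂ * v1) * v3)
      ≤ (a0 ^ 2 + a1 ^ 2) + (b0 ^ 2 + b1 ^ 2) + γ₁ * (1 + M) * (a2 ^ 2 + b3 ^ 2)
        + 2 * γ₁ * M * b2 ^ 2 + (γ₃ * (1 + M) * (a3 ^ 2 + b2 ^ 2) + 2 * γ₂ * M * a3 ^ 2)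
        + (γ₂ * (b1 ^ 2 + b3 ^ 2) + γ₃ * M * (b2 ^ 2 + b3 ^ 2) + 2 * γ₂ * M * b3 ^ 2) := by
    linarith only [T1, T2, T3, T4, T5, T6, T7, T8]
  have step2 : (a0 ^ 2 + a1 ^ 2) + (b0 ^ 2 + b1 ^ 2) + γ₁ * (1 + M) * (a2 ^ 2 + b3 ^ 2)
        + 2 * γ₁ * M * b2 ^ 2 + (γ₃ * (1 + M) * (a3 ^ 2 + b2 ^ 2) + 2 * γ₂ * M * a3 ^ 2)
        + (γ₂ * (b1 ^ 2 + b3 ^ 2) + γ₃ * M * (b2 ^ 2 + b3 ^ 2) + 2 * γ₂ * M * b3 ^ 2)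
      ≤ (1 + 1 + γ₁ * (1 + M) + 2 * γ₁ * M + γ₃ * (1 + M) + 2 * γ₂ * M + γ₂
        + γ₃ * M + 2 * γ₂ * M) * Q := by
    linarith only [s1, s2, p5, p6, p7a, p7b, p8a, p8b, p8c]
  linarith only [step1, step2, hsum]


open Set Filter
open scoped Topology

lemma q_hasDerivAt (x : ℝ) :
    HasDerivAt (fun y : ℝ => max (y - 1) 0 ^ 2 + max (-y) 0 ^ 2)
      (2 * max (x - 1) 0 - 2 * max (-x) 0) x := by
  have h1 : HasDerivAt (fun y : ℝ => max (y - 1) 0 ^ 2) (2 * max (x - 1) 0) x := by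
    have := (posPart_sq_hasDerivAt (x - 1)).comp x ((hasDerivAt_id x).sub_const 1)
    simpa [Function.comp_def] using this
  have h2 : HasDerivAt (fun y : ℝ => max (-y) 0 ^ 2) (-(2 * max (-x) 0)) x := by
    have := (posPart_sq_hasDerivAt (-x)).comp x (hasDerivAt_neg x)
    simpa [Function.comp_def] using this
  have e : 2 * max (x - 1) 0 - 2 * max (-x) 0 = 2 * max (x - 1) 0 + -(2 * max (-x) 0) := by
    ring
  rw [e]
  exact h1.add h2

lemma pp_le_of_abs (x M : ℝ) (h : |x| ≤ M) (hM : 0 ≤ M) :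
    max (x - 1) 0 ≤ M ∧ max (-x) 0 ≤ M := by
  have h1 := abs_le.1 h
  constructor <;> apply max_le <;> linarith

lemma mem_Icc_of_q_nonpos (x : ℝ) (h : max (x - 1) 0 ^ 2 + max (-x) 0 ^ 2 ≤ 0) :
    x ∈ Set.Icc (0 : ℝ) 1 := by
  have h1 : max (x - 1) 0 ^ 2 = 0 :=
    le_antisymm (by nlinarith [sq_nonneg (max (-x) 0)]) (sq_nonneg _)
  have h2 : max (-x) 0 ^ 2 = 0 :=
    le_antisymm (by nlinarith [sq_nonneg (max (x - 1) 0)]) (sq_nonneg _)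
  have h1' : max (x - 1) 0 = 0 := by
    have := sq_eq_zero_iff.1 h1; exact this
  have h2' : max (-x) 0 = 0 := by
    have := sq_eq_zero_iff.1 h2; exact this
  constructor
  · have := le_max_left (-x) 0; rw [h2'] at this; linarith
  · have := le_max_left (x - 1) 0; rw [h1'] at this; linarith

theorem zip_cube_positively_invariant
    (κ γ₁ γ₂ γ₃ f : ℝ) (hκ : 0 < κ) (hγ₁ : 0 < γ₁) (hγ₂ : 0 < γ₂) (hγ₃ : 0 < γ₃)
    (hf : f ∈ Set.Ico (0 : ℝ) 1)
    (u : ℝ → Fin 4 → ℝ)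
    (hode : ∀ t ≥ (0 : ℝ), HasDerivAt u (zipField κ γ₁ γ₂ γ₃ f (u t)) t)
    (h0 : ∀ i, u 0 i ∈ Set.Icc (0 : ℝ) 1) :
    ∀ t ≥ (0 : ℝ), ∀ i, u t i ∈ Set.Icc (0 : ℝ) 1 := by
  obtain ⟨hf0, hf1⟩ := hf
  intro t₀ ht₀
  have hcont : ContinuousOn u (Set.Icc 0 t₀) := fun s hs =>
    ((hode s hs.1).continuousAt).continuousWithinAt
  obtain ⟨C, hC⟩ := isCompact_Icc.exists_bound_of_continuousOn hcont
  set M := max C 1 with hMdef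
  have hM : 1 ≤ M := le_max_right _ _
  have hM0 : (0:ℝ) ≤ M := by linarith
  have hbd : ∀ s ∈ Set.Icc (0:ℝ) t₀, ∀ i, |u s i| ≤ M := by
    intro s hs i
    calc |u s i| = ‖u s i‖ := rfl
      _ ≤ ‖u s‖ := norm_le_pi_norm (u s) i
      _ ≤ C := hC s hs
      _ ≤ M := le_max_left _ _
  set K := 4 * (1 + γ₁ + γ₂ + γ₃) * (1 + M) with hKdef
  set φ : ℝ → ℝ := fun s =>
    (max (u s 0 - 1) 0 ^ 2 + max (-(u s 0)) 0 ^ 2)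
    + (max (u s 1 - 1) 0 ^ 2 + max (-(u s 1)) 0 ^ 2)
    + (max (u s 2 - 1) 0 ^ 2 + max (-(u s 2)) 0 ^ 2)
    + (max (u s 3 - 1) 0 ^ 2 + max (-(u s 3)) 0 ^ 2) with hφdef
  set D : ℝ → ℝ := fun s =>
    (2 * max (u s 0 - 1) 0 - 2 * max (-(u s 0)) 0) * zipField κ γ₁ γ₂ γ₃ f (u s) 0
    + (2 * max (u s 1 - 1) 0 - 2 * max (-(u s 1)) 0) * zipField κ γ₁ γ₂ γ₃ f (u s) 1
    + (2 * max (u s 2 - 1) 0 - 2 * max (-(u s 2)) 0) * zipField κ γ₁ γ₂ γ₃ f (u s) 2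
    + (2 * max (u s 3 - 1) 0 - 2 * max (-(u s 3)) 0) * zipField κ γ₁ γ₂ γ₃ f (u s) 3
    with hDdef
  have hD : ∀ s, 0 ≤ s → HasDerivAt φ (D s) s := by
    intro s hs
    have hui : ∀ i, HasDerivAt (fun t => u t i) (zipField κ γ₁ γ₂ γ₃ f (u s) i) s :=
      hasDerivAt_pi.1 (hode s hs)
    have g0 := (q_hasDerivAt (u s 0)).comp s (hui 0)
    have g1 := (q_hasDerivAt (u s 1)).comp s (hui 1)
    have g2 := (q_hasDerivAt (u s 2)).comp s (hui 2)
    have g3 := (q_hasDerivAt (u s 3)).comp s (hui 3)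
    have := ((g0.add g1).add g2).add g3
    simpa [Function.comp_def, Pi.add_def, hφdef, hDdef] using this
  have hφcont : ContinuousOn φ (Set.Icc 0 t₀) := fun s hs =>
    ((hD s hs.1).continuousAt).continuousWithinAt
  have hφ0 : φ 0 ≤ 0 := by
    have hz : ∀ i, max (u 0 i - 1) 0 = 0 ∧ max (-(u 0 i)) 0 = 0 := fun i =>
      ⟨max_eq_right (by linarith [(h0 i).2]), max_eq_right (by linarith [(h0 i).1])⟩
    simp only [hφdef, (hz 0).1, (hz 0).2, (hz 1).1, (hz 1).2, (hz 2).1, (hz 2).2,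
      (hz 3).1, (hz 3).2]
    norm_num
  have hbound : ∀ x ∈ Set.Ico (0:ℝ) t₀, D x ≤ K * φ x + 0 := by
    intro x hx
    rw [add_zero]
    have hx' : x ∈ Set.Icc (0:ℝ) t₀ := Set.Ico_subset_Icc_self hx
    have b0 := abs_le.1 (hbd x hx' 0)
    have b1 := abs_le.1 (hbd x hx' 1)
    have b2 := abs_le.1 (hbd x hx' 2)
    have b3 := abs_le.1 (hbd x hx' 3)
    have e0 : zipField κ γ₁ γ₂ γ₃ f (u x) 0 = κ * (u x 2) ^ 2 * (1 - u x 0) - u x 0 := rfl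
    have e1 : zipField κ γ₁ γ₂ γ₃ f (u x) 1 = u x 0 * f - u x 1 := rfl
    have e2 : zipField κ γ₁ γ₂ γ₃ f (u x) 2 = 1 - γ₁ * u x 2 * u x 3 - u x 2 := rfl
    have e3 : zipField κ γ₁ γ₂ γ₃ f (u x) 3
        = γ₂ * u x 1 - γ₃ * u x 2 * u x 3 - (1 + γ₂ * u x 1) * u x 3 := rfl
    simp only [hDdef, hφdef, e0, e1, e2, e3]
    exact zip_key κ γ₁ γ₂ γ₃ f M (u x 0) (u x 1) (u x 2) (u x 3)
      (max (u x 0 - 1) 0) (max (u x 1 - 1) 0) (max (u x 2 - 1) 0) (max (u x 3 - 1) 0)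
      (max (-(u x 0)) 0) (max (-(u x 1)) 0) (max (-(u x 2)) 0) (max (-(u x 3)) 0)
      _ hκ hγ₁ hγ₂ hγ₃ hf0 hf1.le hM
      b0.1 b1.1 b1.2 b2.1 b3.1
      (le_max_right _ _) (le_max_right _ _) (le_max_right _ _) (le_max_right _ _)
      (le_max_right _ _) (le_max_right _ _) (le_max_right _ _) (le_max_right _ _)
      (le_max_left _ _) (le_max_left _ _) (le_max_left _ _) (le_max_left _ _) (le_max_left _ _)
      (pp_le_of_abs _ _ (hbd x hx' 2) hM0).1 (pp_le_of_abs _ _ (hbd x hx' 3) hM0).1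
      (pp_le_of_abs _ _ (hbd x hx' 3) hM0).2
      (pp_mul (u x 0 - 1)) (pp_mul (u x 1 - 1)) (pp_mul (u x 2 - 1)) (pp_mul (u x 3 - 1))
      (pp_mul (-(u x 0))) (pp_mul (-(u x 1))) (pp_mul (-(u x 2))) (pp_mul (-(u x 3)))
      rfl
  have hgr := le_gronwallBound_of_liminf_deriv_right_le hφcont
    (fun x hx r hr => ((hD x hx.1).hasDerivWithinAt.liminf_right_slope_le hr))
    hφ0 hbound t₀ (Set.right_mem_Icc.2 ht₀)
  rw [sub_zero, gronwallBound_ε0_δ0] at hgr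
  have q0 := sq_nonneg (max (u t₀ 0 - 1) 0)
  have q0' := sq_nonneg (max (-(u t₀ 0)) 0)
  have q1 := sq_nonneg (max (u t₀ 1 - 1) 0)
  have q1' := sq_nonneg (max (-(u t₀ 1)) 0)
  have q2 := sq_nonneg (max (u t₀ 2 - 1) 0)
  have q2' := sq_nonneg (max (-(u t₀ 2)) 0)
  have q3 := sq_nonneg (max (u t₀ 3 - 1) 0)
  have q3' := sq_nonneg (max (-(u t₀ 3)) 0)
  have hφt : φ t₀ = (max (u t₀ 0 - 1) 0 ^ 2 + max (-(u t₀ 0)) 0 ^ 2)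
    + (max (u t₀ 1 - 1) 0 ^ 2 + max (-(u t₀ 1)) 0 ^ 2)
    + (max (u t₀ 2 - 1) 0 ^ 2 + max (-(u t₀ 2)) 0 ^ 2)
    + (max (u t₀ 3 - 1) 0 ^ 2 + max (-(u t₀ 3)) 0 ^ 2) := rfl
  rw [hφt] at hgr
  intro i
  fin_cases i
  · show u t₀ 0 ∈ Set.Icc (0:ℝ) 1
    exact mem_Icc_of_q_nonpos _ (by linarith)
  · show u t₀ 1 ∈ Set.Icc (0:ℝ) 1
    exact mem_Icc_of_q_nonpos _ (by linarith)
  · show u t₀ 2 ∈ Set.Icc (0:ℝ) 1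
    exact mem_Icc_of_q_nonpos _ (by linarith)
  · show u t₀ 3 ∈ Set.Icc (0:ℝ) 1
    exact mem_Icc_of_q_nonpos _ (by linarith)
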